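/- Let R be a Tate ring with ring of definition R₀ topologized by ϖ ∈ R₀. Let G be a torsion-free abelian group and suppose R = ⊕_{g∈G} R^(g) is a G-grading by additive subgroups with R^(g)·R^(h) ⊆ R^(g+h), and suppose R₀ = ⊕_{g∈G} (R₀ ∩ R^(g)). Then R° is also graded: for every power-bounded r = Σ r_g with r_g ∈ R^(g), each homogeneous component r_g is power-bounded. -/

import Mathlib

open Finsupp Finset DirectSum

set_option linter.unusedSectionVars false

section Aux
variable {R : Type*} [CommRing R] {G : Type*} [AddCommGroup G] [DecidableEq G]
  {ℛ : G → AddSubgroup R}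

noncomputable def pbgTot (G R : Type*) [AddCommGroup G] [CommRing R] : (G →₀ R) →+ R :=
  Finsupp.liftAddHom (fun _ => AddMonoidHom.id R)

theorem pbgTot_apply (s : G →₀ R) : pbgTot G R s = s.sum (fun _ x => x) := by
  simp [pbgTot, Finsupp.liftAddHom_apply]
  rfl

theorem pbgTot_single (g : G) (x : R) : pbgTot G R (Finsupp.single g x) = x := by
  simp [pbgTot]

/-- uniqueness: a homogeneous decomposition of 0 is 0. -/
theorem pbg_dec_unique (hinternal : DirectSum.IsInternal ℛ)
    (s : G →₀ R) (hs : ∀ g, s g ∈ ℛ g) (h0 : (s.sum fun _ x => x) = 0) : s = 0 := by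
  classical
  set d : ⨁ g, ℛ g := ∑ g ∈ s.support, DirectSum.of (fun g => ℛ g) g ⟨s g, hs g⟩ with hd
  have hcoe : DirectSum.coeAddMonoidHom ℛ d = s.sum (fun _ x => x) := by
    rw [hd, map_sum]
    simp only [DirectSum.coeAddMonoidHom_of]
    rfl
  have hd0 : d = 0 := by
    apply hinternal.injective
    rw [hcoe, h0, map_zero]
  ext g
  by_cases hg : g ∈ s.support
  · have h1 : d g = ⟨s g, hs g⟩ := by
      rw [hd, DFinsupp.finset_sum_apply]
      rw [Finset.sum_eq_single g]
      · simp [DirectSum.of_eq_same]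
      · intro b _ hb
        exact DirectSum.of_eq_of_ne _ _ _ hb.symm
      · exact fun h => absurd hg h
    have h2 : d g = 0 := by rw [hd0]; rfl
    have := h1.symm.trans h2
    simpa using congrArg Subtype.val this
  · simpa using Finsupp.notMem_support_iff.mp hg

/-- existence of a homogeneous decomposition. -/
theorem pbg_dec_exists (hinternal : DirectSum.IsInternal ℛ) (x : R) :
    ∃ s : G →₀ R, (∀ g, s g ∈ ℛ g) ∧ (s.sum fun _ x => x) = x := by
  classical
  obtain ⟨d, hd⟩ := hinternal.surjective x
  refine ⟨∑ g ∈ d.support, Finsupp.single g ((d g : R)), ?_, ?_⟩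
  · intro g
    rw [Finsupp.finset_sum_apply]
    refine AddSubgroup.sum_mem _ (fun h _ => ?_)
    rw [Finsupp.single_apply]
    split_ifs with he
    · exact he ▸ (d h).2
    · exact zero_mem _
  · rw [← pbgTot_apply, map_sum]
    simp only [pbgTot_single]
    rw [← hd, DirectSum.coeAddMonoidHom_eq_dfinsuppSum]
    rw [DFinsupp.sum]
end Aux
open Finsupp Finset DirectSum
set_option linter.unusedSectionVars false
section Aux2
variable {R : Type*} [CommRing R] {G : Type*} [AddCommGroup G] [DecidableEq G]
  {ℛ : G → AddSubgroup R}

theorem pbg_dec_eq (hinternal : DirectSum.IsInternal ℛ)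
    (s t : G →₀ R) (hs : ∀ g, s g ∈ ℛ g) (ht : ∀ g, t g ∈ ℛ g)
    (h : (s.sum fun _ x => x) = (t.sum fun _ x => x)) : s = t := by
  have := pbg_dec_unique hinternal (s - t) (fun g => by
    rw [Finsupp.sub_apply]; exact sub_mem (hs g) (ht g)) (by
    rw [← pbgTot_apply, map_sub, pbgTot_apply, pbgTot_apply, h, sub_self])
  exact sub_eq_zero.mp this

/-- Key uniformity lemma: components of `N`-bounded elements are `M`-bounded,
with `M` depending only on `N`. -/
theorem pbg_comp_bound (R₀ : Subring R) (ϖ : Rˣ) (hϖ : (ϖ : R) ∈ R₀)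
    (hloc : ∀ r : R, ∃ n : ℕ, (ϖ : R) ^ n * r ∈ R₀)
    (hinternal : DirectSum.IsInternal ℛ)
    (hmul : ∀ (g h : G), ∀ x ∈ ℛ g, ∀ y ∈ ℛ h, x * y ∈ ℛ (g + h))
    (hR₀graded : ∀ s : G →₀ R, (∀ g, s g ∈ ℛ g) →
      (s.sum fun _ x => x) ∈ R₀ → ∀ g, s g ∈ R₀) (N : ℕ) :
    ∃ M : ℕ, ∀ s : G →₀ R, (∀ g, s g ∈ ℛ g) →
      ((ϖ : R) ^ N * (s.sum fun _ x => x)) ∈ R₀ → ∀ g, (ϖ : R) ^ M * s g ∈ R₀ := by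
  classical
  obtain ⟨c, hc, hcsum⟩ := pbg_dec_exists hinternal (((ϖ⁻¹ : Rˣ) : R) ^ N)
  set n : G → ℕ := fun a => (hloc (c a)).choose with hn
  have hnspec : ∀ a, (ϖ : R) ^ (n a) * c a ∈ R₀ := fun a => (hloc (c a)).choose_spec
  refine ⟨c.support.sup n, ?_⟩
  intro s hs hy
  set M := c.support.sup n with hM
  set y := (ϖ : R) ^ N * (s.sum fun _ x => x) with hydef
  obtain ⟨t, ht, htsum⟩ := pbg_dec_exists hinternal y
  have htR0 : ∀ g, t g ∈ R₀ := hR₀graded t ht (htsum ▸ hy)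
  set u : G →₀ R := ∑ a ∈ c.support, ∑ h ∈ t.support, Finsupp.single (a + h) (c a * t h)
    with hu
  have hucomp : ∀ g, u g ∈ ℛ g := by
    intro g
    rw [hu, Finsupp.finset_sum_apply]
    refine AddSubgroup.sum_mem _ (fun a _ => ?_)
    rw [Finsupp.finset_sum_apply]
    refine AddSubgroup.sum_mem _ (fun h _ => ?_)
    rw [Finsupp.single_apply]
    split_ifs with he
    · exact he ▸ hmul a h (c a) (hc a) (t h) (ht h)
    · exact zero_mem _
  have husum : (u.sum fun _ x => x) = s.sum fun _ x => x := by
    rw [← pbgTot_apply, hu, map_sum]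
    have : ∀ a ∈ c.support, pbgTot G R (∑ h ∈ t.support, Finsupp.single (a + h) (c a * t h))
        = c a * (t.sum fun _ x => x) := by
      intro a _
      rw [map_sum]
      simp only [pbgTot_single]
      rw [Finsupp.sum, Finset.mul_sum]
    rw [Finset.sum_congr rfl this, ← Finset.sum_mul]
    have h1 : ∑ a ∈ c.support, c a = ((ϖ⁻¹ : Rˣ) : R) ^ N := by
      rw [← hcsum]; rfl
    rw [h1, htsum, hydef, ← mul_assoc]
    have : ((ϖ⁻¹ : Rˣ) : R) ^ N * (ϖ : R) ^ N = 1 := by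
      rw [← mul_pow]
      norm_cast
      simp
    rw [this, one_mul]
  have hsu : s = u := pbg_dec_eq hinternal s u hs hucomp husum.symm
  intro g
  rw [hsu, hu, Finsupp.finset_sum_apply, Finset.mul_sum]
  refine Subring.sum_mem _ (fun a ha => ?_)
  rw [Finsupp.finset_sum_apply, Finset.mul_sum]
  refine Subring.sum_mem _ (fun h _ => ?_)
  rw [Finsupp.single_apply]
  split_ifs with he
  · have hna : n a ≤ M := Finset.le_sup ha
    have : (ϖ : R) ^ M * (c a * t h)
        = (ϖ : R) ^ (M - n a) * ((ϖ : R) ^ (n a) * c a) * t h := by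
      rw [← mul_assoc, ← mul_assoc, ← pow_add, Nat.sub_add_cancel hna]
    rw [this]
    exact Subring.mul_mem _ (Subring.mul_mem _ (Subring.pow_mem _ hϖ _) (hnspec a)) (htR0 h)
  · rw [mul_zero]; exact zero_mem _
end Aux2
section Aux3
variable {R : Type*} [CommRing R] {G : Type*} [AddCommGroup G] [DecidableEq G]
  {ℛ : G → AddSubgroup R}

theorem pbg_prod_mem (hmul : ∀ (g h : G), ∀ x ∈ ℛ g, ∀ y ∈ ℛ h, x * y ∈ ℛ (g + h))
    {ι : Type*} (A : Finset ι) (hA : A.Nonempty) (d : ι → G) (x : ι → R)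
    (hx : ∀ i ∈ A, x i ∈ ℛ (d i)) : (∏ i ∈ A, x i) ∈ ℛ (∑ i ∈ A, d i) := by
  revert hx
  induction hA using Finset.Nonempty.cons_induction with
  | singleton a => intro hx; simpa using hx a (by simp)
  | cons a A h hA ih =>
    intro hx
    rw [Finset.prod_cons, Finset.sum_cons]
    exact hmul _ _ _ (hx a (Finset.mem_cons_self a A)) _
      (ih fun i hi => hx i (Finset.mem_cons_of_mem hi))

theorem pbg_pow_dec (hmul : ∀ (g h : G), ∀ x ∈ ℛ g, ∀ y ∈ ℛ h, x * y ∈ ℛ (g + h))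
    (s : G →₀ R) (hs : ∀ g, s g ∈ ℛ g) (m : ℕ) (hm : m ≠ 0)
    (g₀ : G) (hg₀ : g₀ ∈ s.support)
    (huniq : ∀ (p : (i : ℕ) → i ∈ Finset.range m → G),
      (∀ i hi, p i hi ∈ s.support) →
      (∑ i ∈ (Finset.range m).attach, p i.1 i.2) = m • g₀ → ∀ i hi, p i hi = g₀) :
    ∃ u : G →₀ R, (∀ g, u g ∈ ℛ g) ∧
      (u.sum fun _ x => x) = (s.sum fun _ x => x) ^ m ∧ u (m • g₀) = (s g₀) ^ m := by
  classical
  have hAne : (Finset.range m).attach.Nonempty := Finset.attach_nonempty_iff.mpr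
    (Finset.nonempty_range_iff.mpr hm)
  set u : G →₀ R := ∑ p ∈ (Finset.range m).pi (fun _ => s.support),
      Finsupp.single (∑ i ∈ (Finset.range m).attach, p i.1 i.2) (∏ i ∈ (Finset.range m).attach, s (p i.1 i.2)) with hu
  refine ⟨u, ?_, ?_, ?_⟩
  · intro g
    rw [hu, Finsupp.finset_sum_apply]
    refine AddSubgroup.sum_mem _ (fun p hp => ?_)
    rw [Finsupp.single_apply]
    split_ifs with he
    · exact he ▸ pbg_prod_mem hmul _ hAne _ _
        (fun i _ => hs (p i.1 i.2))
    · exact zero_mem _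
  · rw [← pbgTot_apply, hu, map_sum]
    simp only [pbgTot_single]
    have h1 : (s.sum fun _ x => x) ^ m = ∏ _i ∈ Finset.range m, ∑ g ∈ s.support, s g := by
      rw [Finset.prod_const, Finset.card_range]; rfl
    rw [h1, Finset.prod_sum]
  · rw [hu, Finsupp.finset_sum_apply]
    rw [Finset.sum_eq_single (fun _ _ => g₀ : (i : ℕ) → i ∈ Finset.range m → G)]
    · rw [Finsupp.single_apply, if_pos, Finset.prod_const, Finset.card_attach,
        Finset.card_range]
      rw [Finset.sum_const, Finset.card_attach, Finset.card_range]
    · intro p hp hne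
      rw [Finsupp.single_apply]
      split_ifs with he
      · exfalso
        apply hne
        funext i hi
        exact huniq p (fun i hi => Finset.mem_pi.mp hp i hi) he i hi
      · rfl
    · intro hnotmem
      exfalso
      exact hnotmem (Finset.mem_pi.mpr (fun i hi => hg₀))
end Aux3
section Aux4
variable {G : Type*} [AddCommGroup G] [DecidableEq G]

theorem pbg_exists_max
    (htf : ∀ (g : G) (n : ℕ), n ≠ 0 → n • g = 0 → g = 0)
    (T : Finset G) (hT : T.Nonempty) :
    ∃ g₀ ∈ T, ∀ {ι : Type*} (A : Finset ι) (p : ι → G) (m : ℕ),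
      (∀ i ∈ A, p i ∈ T) → A.card = m → (∑ i ∈ A, p i) = m • g₀ → ∀ i ∈ A, p i = g₀ := by
  classical
  set H : Submodule ℤ G := Submodule.span ℤ (T : Set G) with hH
  have hTH : ∀ g ∈ T, g ∈ H := fun g hg => Submodule.subset_span hg
  haveI : Module.Finite ℤ H := Module.Finite.span_of_finite ℤ T.finite_toSet
  haveI : NoZeroSMulDivisors ℤ H := by
    refine ⟨fun {z x} h => ?_⟩
    by_cases hz : z = 0
    · exact Or.inl hz
    · refine Or.inr ?_
      have hg : z • (x : G) = 0 := by
        have := congrArg (Subtype.val) h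
        simpa using this
      have hg' : (z.natAbs : ℤ) • (x : G) = 0 := by
        rcases Int.natAbs_eq z with he | he
        · rw [← he, hg]
        · rw [show (z.natAbs : ℤ) = -z by omega, neg_smul, hg, neg_zero]
      rw [natCast_zsmul] at hg'
      have := htf (x : G) z.natAbs (by simpa using hz) hg'
      exact Subtype.ext this
  haveI : Module.Free ℤ H := Module.free_of_finite_type_torsion_free'
  set ι := Module.Free.ChooseBasisIndex ℤ H with hι
  set b : Module.Basis ι ℤ H := Module.Free.chooseBasis ℤ H with hb
  set k := Fintype.card ι with hk
  set e : ι ≃ Fin k := Fintype.equivFin ι with he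
  haveI : WellFoundedLT (Fin k) := Finite.to_wellFoundedLT
  set Ψ : H →+ Lex (Fin k → ℤ) := AddMonoidHom.mk'
      (fun x => toLex (fun j => b.repr x (e.symm j)))
    (by
      intro x y
      apply toLex.injective
      funext j
      simp [map_add]
      rfl) with hΨ
  have hΨinj : Function.Injective Ψ := by
    intro x y hxy
    have : ∀ j, b.repr x (e.symm j) = b.repr y (e.symm j) := by
      intro j
      exact congrFun (toLex.injective hxy) j
    apply b.repr.injective
    ext i
    simpa using this (e i)
  set f : G → Lex (Fin k → ℤ) := fun g => if h : g ∈ H then Ψ ⟨g, h⟩ else 0 with hf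
  have hfH : ∀ (g : G) (hg : g ∈ H), f g = Ψ ⟨g, hg⟩ := fun g hg => dif_pos hg
  obtain ⟨g₀, hg₀T, hg₀max⟩ := Finset.exists_max_image T f hT
  refine ⟨g₀, hg₀T, ?_⟩
  intro ι' A p m hp hcard hsum i hi
  have hfsum : ∀ (A : Finset ι') (q : ι' → G), (∀ i ∈ A, q i ∈ H) →
      f (∑ i ∈ A, q i) = ∑ i ∈ A, f (q i) := by
    intro A q hq
    induction A using Finset.cons_induction with
    | empty =>
      simp only [Finset.sum_empty]
      rw [hfH 0 (zero_mem H)]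
      exact map_zero Ψ
    | cons a A ha ih =>
      rw [Finset.sum_cons, Finset.sum_cons]
      have h1 : q a ∈ H := hq a (Finset.mem_cons_self a A)
      have h2 : ∀ i ∈ A, q i ∈ H := fun i hi => hq i (Finset.mem_cons_of_mem hi)
      have h3 : (∑ i ∈ A, q i) ∈ H := Submodule.sum_mem _ h2
      rw [hfH _ (Submodule.add_mem _ h1 h3), hfH _ h1, ← ih h2, hfH _ h3]
      rw [show (⟨q a + ∑ i ∈ A, q i, _⟩ : H) = ⟨q a, h1⟩ + ⟨∑ i ∈ A, q i, h3⟩ from rfl,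
        map_add]
  have hpH : ∀ i ∈ A, p i ∈ H := fun i hi => hTH _ (hp i hi)
  have h1 : ∑ j ∈ A, f (p j) = ∑ j ∈ A, f g₀ := by
    rw [← hfsum A p hpH, hsum, Finset.sum_const, hcard]
    have hmH : m • g₀ ∈ H := nsmul_mem (hTH _ hg₀T) m
    rw [hfH _ hmH, hfH _ (hTH _ hg₀T),
      show (⟨m • g₀, hmH⟩ : H) = m • (⟨g₀, hTH _ hg₀T⟩ : H) from Subtype.ext (by simp),
      map_nsmul]
  have h2 := (Finset.sum_eq_sum_iff_of_le (fun j hj => hg₀max _ (hp j hj))).mp h1 i hi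
  have h3 : Ψ ⟨p i, hpH i hi⟩ = Ψ ⟨g₀, hTH _ hg₀T⟩ := by
    rw [← hfH _ (hpH i hi), ← hfH _ (hTH _ hg₀T)]
    exact h2
  have := hΨinj h3
  exact congrArg Subtype.val this
end Aux4

/-- If a Tate ring `R` is graded by a torsion-free abelian group `G` (an
internal direct sum decomposition `R = ⊕_g R^{(g)}` with `R^{(g)}·R^{(h)} ⊆ R^{(g+h)}`),
and the ring of definition `R₀` is graded by this grading, then the power-bounded
subring `R°` is also graded: every homogeneous component of a power-bounded element is
power-bounded. -/
theorem powerBounded_graded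
    (R : Type*) [CommRing R] (R₀ : Subring R) (ϖ : Rˣ) (hϖ : (ϖ : R) ∈ R₀)
    (hloc : ∀ r : R, ∃ n : ℕ, (ϖ : R) ^ n * r ∈ R₀)
    (G : Type*) [AddCommGroup G] [DecidableEq G]
    (htf : ∀ (g : G) (n : ℕ), n ≠ 0 → n • g = 0 → g = 0)
    (ℛ : G → AddSubgroup R)
    (hinternal : DirectSum.IsInternal ℛ)
    (hmul : ∀ (g h : G), ∀ x ∈ ℛ g, ∀ y ∈ ℛ h, x * y ∈ ℛ (g + h))
    (hR₀graded : ∀ s : G →₀ R, (∀ g, s g ∈ ℛ g) →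
      (s.sum fun _ x => x) ∈ R₀ → ∀ g, s g ∈ R₀) :
    ∀ s : G →₀ R, (∀ g, s g ∈ ℛ g) →
      (∃ N : ℕ, ∀ m : ℕ, (ϖ : R) ^ N * (s.sum fun _ x => x) ^ m ∈ R₀) →
      ∀ g, ∃ N : ℕ, ∀ m : ℕ, (ϖ : R) ^ N * (s g) ^ m ∈ R₀ := by
  classical
  suffices main : ∀ n : ℕ, ∀ s : G →₀ R, s.support.card = n → (∀ g, s g ∈ ℛ g) →
      (∃ N : ℕ, ∀ m : ℕ, (ϖ : R) ^ N * (s.sum fun _ x => x) ^ m ∈ R₀) →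
      ∀ g, ∃ N : ℕ, ∀ m : ℕ, (ϖ : R) ^ N * (s g) ^ m ∈ R₀ by
    intro s hs hb g
    exact main s.support.card s rfl hs hb g
  intro n
  induction n using Nat.strong_induction_on with
  | _ n ih =>
  intro s hcard hs hb g
  by_cases hgsupp : g ∈ s.support
  · have hTne : s.support.Nonempty := ⟨g, hgsupp⟩
    obtain ⟨g₀, hg₀T, hg₀key⟩ := pbg_exists_max htf s.support hTne
    obtain ⟨N, hN⟩ := hb
    obtain ⟨M, hM⟩ := pbg_comp_bound R₀ ϖ hϖ hloc hinternal hmul hR₀graded N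
    have hg₀bdd : ∀ m : ℕ, (ϖ : R) ^ M * (s g₀) ^ m ∈ R₀ := by
      intro m
      rcases Nat.eq_zero_or_pos m with rfl | hm
      · rw [pow_zero, mul_one]
        exact Subring.pow_mem _ hϖ _
      · obtain ⟨u, hu1, hu2, hu3⟩ := pbg_pow_dec hmul s hs m hm.ne' g₀ hg₀T
          (fun p hp hsum i hi => by
            have := hg₀key (Finset.range m).attach (fun i => p i.1 i.2) m
              (fun i _ => hp i.1 i.2) (by simp) hsum ⟨i, hi⟩ (Finset.mem_attach _ _)
            exact this)
        have := hM u hu1 (by rw [hu2]; exact hN m) (m • g₀)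
        rwa [hu3] at this
    by_cases hgg : g = g₀
    · exact hgg ▸ ⟨M, hg₀bdd⟩
    · set s' : G →₀ R := s.erase g₀ with hs'def
      have hs' : ∀ h, s' h ∈ ℛ h := by
        intro h
        rw [hs'def]
        by_cases hh : h = g₀
        · rw [hh, Finsupp.erase_same]; exact zero_mem _
        · rw [Finsupp.erase_ne hh]; exact hs h
      have hcard' : s'.support.card < n := by
        rw [hs'def, Finsupp.support_erase, Finset.card_erase_of_mem hg₀T, hcard]
        have : 0 < n := hcard ▸ Finset.card_pos.mpr hTne
        omega
      have hsum' : (s'.sum fun _ x => x) = (s.sum fun _ x => x) - s g₀ := by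
        have h0 := congrArg (pbgTot G R) (Finsupp.single_add_erase g₀ s)
        rw [map_add, pbgTot_single] at h0
        rw [hs'def, ← pbgTot_apply, ← pbgTot_apply]
        exact eq_sub_of_add_eq' h0
      have hb' : ∃ N' : ℕ, ∀ m : ℕ, (ϖ : R) ^ N' * (s'.sum fun _ x => x) ^ m ∈ R₀ := by
        refine ⟨N + M, fun m => ?_⟩
        rw [hsum', sub_eq_add_neg, add_pow, Finset.mul_sum]
        refine Subring.sum_mem _ (fun j hj => ?_)
        have e1 : (ϖ : R) ^ (N + M) *
            ((s.sum fun _ x => x) ^ j * (-(s g₀)) ^ (m - j) * ((m.choose j : ℕ) : R))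
            = ((ϖ : R) ^ N * (s.sum fun _ x => x) ^ j) *
              ((-1 : R) ^ (m - j) * ((ϖ : R) ^ M * (s g₀) ^ (m - j))) *
              ((m.choose j : ℕ) : R) := by
          rw [neg_pow]; ring
        rw [e1]
        exact Subring.mul_mem _ (Subring.mul_mem _ (hN j)
          (Subring.mul_mem _ (pow_mem (neg_mem (Subring.one_mem R₀)) _) (hg₀bdd _)))
          (natCast_mem R₀ _)
      have hres := ih s'.support.card hcard' s' rfl hs' hb' g
      have : s' g = s g := by rw [hs'def, Finsupp.erase_ne hgg]
      rwa [this] at hres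
  · refine ⟨0, fun m => ?_⟩
    have h0 : s g = 0 := Finsupp.notMem_support_iff.mp hgsupp
    rw [h0, pow_zero, one_mul]
    rcases Nat.eq_zero_or_pos m with rfl | hm
    · simpa using Subring.one_mem R₀
    · rw [zero_pow hm.ne']
      exact zero_mem _
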